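/- arXiv:1409.7944 — 2 statements merged into one kernel-verified Lean document; each statement's English description precedes it below -/
import Mathlib

section
/- Let W be a subspace of V and let ū, û ∈ W, u ∈ V and real numbers λ̄, λ with λ ≥ 0. Suppose: (i) a(ū, v) = λ̄ b(ū, v) for all v ∈ W and b(ū, ū) = 1 (ū is a b-normalized discrete eigenfunction); (ii) a(û, v) = λ b(u, v) for all v ∈ W (û is the Galerkin solution of the auxiliary source problem with data λu); (iii) |λ̄ − λ| ≤ C ‖ū − u‖_a² and ‖ū − u‖_b ≤ C η ‖ū − u‖_a for constants C ≥ 0, η ≥ 0. Then ‖ū − û‖_a ≤ C_b · C · (‖ū − u‖_a + λ η) · ‖ū − u‖_a. (This is estimate (3.11), the bound ‖ū_{h_k} − û_{ℓ+1,h_k}‖_a ≲ η_a(H)‖ū_{h_k} − u_{ℓ,h_k}‖_a, with all constants made explicit.) -/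
open scoped RealInnerProductSpace

/-- Cauchy–Schwarz for a symmetric positive semidefinite bilinear form. -/
lemma psd_cauchy_schwarz {V : Type*} [AddCommGroup V] [Module ℝ V]
    (b : V →ₗ[ℝ] V →ₗ[ℝ] ℝ) (hb_symm : ∀ x y : V, b x y = b y x)
    (hb_psd : ∀ v : V, 0 ≤ b v v) (x y : V) :
    |b x y| ≤ Real.sqrt (b x x) * Real.sqrt (b y y) := by
  have hd : discrim (b y y) (2 * b x y) (b x x) ≤ 0 := by
    apply discrim_le_zero
    intro t
    have h := hb_psd (x + t • y)
    have : b (x + t • y) (x + t • y) = b y y * t ^ 2 + 2 * b x y * t + b x x := by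
      simp [map_add, map_smul, hb_symm y x]
      ring
    linarith [this ▸ h]
  have hsq : (b x y) ^ 2 ≤ b x x * b y y := by
    unfold discrim at hd; nlinarith
  calc |b x y| = Real.sqrt ((b x y) ^ 2) := by
        rw [Real.sqrt_sq_eq_abs]
    _ ≤ Real.sqrt (b x x * b y y) := Real.sqrt_le_sqrt hsq
    _ = Real.sqrt (b x x) * Real.sqrt (b y y) := Real.sqrt_mul (hb_psd x) _

/-- estimate (3.11): the auxiliary Galerkin solution `û` of the source
problem with data `λ u` satisfies `‖ū − û‖_a ≤ C_b C (‖ū − u‖_a + λ η) ‖ū − u‖_a`. -/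
theorem stmt_1 {V : Type*} [NormedAddCommGroup V] [InnerProductSpace ℝ V]
    (b : V →ₗ[ℝ] V →ₗ[ℝ] ℝ)
    (hb_symm : ∀ x y : V, b x y = b y x)
    (hb_psd : ∀ v : V, 0 ≤ b v v)
    (Cb : ℝ) (hCb : 0 < Cb)
    (hb_bound : ∀ v : V, Real.sqrt (b v v) ≤ Cb * ‖v‖)
    (W : Submodule ℝ V) (ubar uhat u : V) (lbar lam : ℝ)
    (hubar : ubar ∈ W) (huhat : uhat ∈ W) (hlam : 0 ≤ lam)
    (heig : ∀ v ∈ W, ⟪ubar, v⟫ = lbar * b ubar v)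
    (hnormal : b ubar ubar = 1)
    (hgal : ∀ v ∈ W, ⟪uhat, v⟫ = lam * b u v)
    (C η : ℝ) (hC : 0 ≤ C) (hη : 0 ≤ η)
    (hlam_err : |lbar - lam| ≤ C * ‖ubar - u‖ ^ 2)
    (hb_err : Real.sqrt (b (ubar - u) (ubar - u)) ≤ C * η * ‖ubar - u‖) :
    ‖ubar - uhat‖ ≤ Cb * C * (‖ubar - u‖ + lam * η) * ‖ubar - u‖ := by
  set e := ubar - uhat with he
  set d := ubar - u with hd
  have heW : e ∈ W := W.sub_mem hubar huhat
  -- key identity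
  have hkey : ‖e‖ ^ 2 = (lbar - lam) * b ubar e + lam * b d e := by
    have h1 : ⟪ubar, e⟫ = lbar * b ubar e := heig e heW
    have h2 : ⟪uhat, e⟫ = lam * b u e := hgal e heW
    have h3 : ⟪e, e⟫ = ⟪ubar, e⟫ - ⟪uhat, e⟫ := by
      rw [he, inner_sub_left]
    have h4 : b d e = b ubar e - b u e := by
      simp only [hd, he, map_sub, LinearMap.sub_apply]
      ring
    have h5 : ⟪e, e⟫ = ‖e‖ ^ 2 := real_inner_self_eq_norm_sq e
    rw [← h5, h3, h1, h2, h4]; ring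
  have hse : Real.sqrt (b e e) ≤ Cb * ‖e‖ := hb_bound e
  have hsbe : (0:ℝ) ≤ Real.sqrt (b e e) := Real.sqrt_nonneg _
  have h1 : |b ubar e| ≤ Cb * ‖e‖ := by
    have := psd_cauchy_schwarz b hb_symm hb_psd ubar e
    rw [hnormal, Real.sqrt_one, one_mul] at this
    exact this.trans hse
  have h2 : |b d e| ≤ (C * η * ‖d‖) * (Cb * ‖e‖) := by
    have hcs := psd_cauchy_schwarz b hb_symm hb_psd d e
    calc |b d e| ≤ Real.sqrt (b d d) * Real.sqrt (b e e) := hcs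
      _ ≤ (C * η * ‖d‖) * (Cb * ‖e‖) := by
          apply mul_le_mul hb_err hse hsbe
          positivity
  have hbound : ‖e‖ ^ 2 ≤ Cb * C * (‖d‖ + lam * η) * ‖d‖ * ‖e‖ := by
    rw [hkey]
    calc (lbar - lam) * b ubar e + lam * b d e
        ≤ |lbar - lam| * |b ubar e| + lam * |b d e| := by
          have := abs_mul (lbar - lam) (b ubar e)
          nlinarith [le_abs_self ((lbar - lam) * b ubar e), le_abs_self (b d e),
            mul_le_mul_of_nonneg_left (le_abs_self (b d e)) hlam]
      _ ≤ C * ‖d‖ ^ 2 * (Cb * ‖e‖) + lam * ((C * η * ‖d‖) * (Cb * ‖e‖)) := by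
          gcongr
      _ = Cb * C * (‖d‖ + lam * η) * ‖d‖ * ‖e‖ := by ring
  rcases eq_or_lt_of_le (norm_nonneg e) with h0 | h0
  · rw [← h0]; positivity
  · have h' : ‖e‖ * ‖e‖ ≤ Cb * C * (‖d‖ + lam * η) * ‖d‖ * ‖e‖ := by
      nlinarith [hbound]
    exact le_of_mul_le_mul_right h' h0
end

section
/- Let n ≥ 1 and let ū_1,…,ū_n and u_1,…,u_n be elements of V. Let β > 1, γ ≥ 0, p ∈ ℕ, C ≥ 0 and δ ≥ 0 be real parameters, and set δ_k := β^{n−k} δ for 1 ≤ k ≤ n. Assume: (i) u_1 = ū_1; (ii) for every k with 2 ≤ k ≤ n, ‖ū_k − u_k‖ ≤ γ^p ‖ū_k − u_{k−1}‖; (iii) for every k with 2 ≤ k ≤ n, ‖ū_k − ū_{k−1}‖ ≤ C δ_k; (iv) β γ^p < 1. Then ‖ū_n − u_n‖ ≤ C γ^p / (1 − β γ^p) · δ. (This is Theorem 3.2, the a-norm error estimate (3.18) for the eigenfunction approximation produced by the Full Multigrid Scheme, in abstract form: ū_k is the exact finite element eigenfunction on level k, u_k the computed approximation, and δ_k = δ_{h_k}(λ)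 the best-approximation errors, which satisfy δ_{h_k} = δ_{h_{k−1}}/β.) -/
/-- Theorem 3.2 in abstract form: the full multigrid iterates satisfy
`‖ū_n − u_n‖ ≤ C γ^p / (1 − β γ^p) · δ` under the condition `β γ^p < 1`. -/
theorem stmt_9 {V : Type*} [NormedAddCommGroup V] [NormedSpace ℝ V]
    (n : ℕ) (hn : 1 ≤ n) (ubar u : ℕ → V)
    (β γ : ℝ) (p : ℕ) (C δ : ℝ)
    (hβ : 1 < β) (hγ : 0 ≤ γ) (hC : 0 ≤ C) (hδ : 0 ≤ δ)
    (hinit : u 1 = ubar 1)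
    (hreduce : ∀ k : ℕ, 2 ≤ k → k ≤ n →
      ‖ubar k - u k‖ ≤ γ ^ p * ‖ubar k - u (k - 1)‖)
    (happrox : ∀ k : ℕ, 2 ≤ k → k ≤ n →
      ‖ubar k - ubar (k - 1)‖ ≤ C * (β ^ (n - k) * δ))
    (hcond : β * γ ^ p < 1) :
    ‖ubar n - u n‖ ≤ C * γ ^ p / (1 - β * γ ^ p) * δ := by
  have hγp : 0 ≤ γ ^ p := pow_nonneg hγ p
  have hden : 0 < 1 - β * γ ^ p := by linarith
  set K : ℝ := C * γ ^ p / (1 - β * γ ^ p) with hK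
  have hK0 : 0 ≤ K := div_nonneg (mul_nonneg hC hγp) hden.le
  have key : ∀ k : ℕ, 1 ≤ k → k ≤ n → ‖ubar k - u k‖ ≤ K * (β ^ (n - k) * δ) := by
    intro k
    induction k with
    | zero => intro h; omega
    | succ m ih =>
      intro h1 hle
      rcases Nat.eq_or_lt_of_le h1 with h1' | h1'
      · rw [← h1', hinit, sub_self, norm_zero]
        exact mul_nonneg hK0 (mul_nonneg (pow_nonneg (by linarith) _) hδ)
      · have hm1 : 1 ≤ m := by omega
        have h2 : 2 ≤ m + 1 := by omega
        have hmn : m ≤ n := by omega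
        have ihm := ih hm1 hmn
        have hr := hreduce (m + 1) h2 hle
        have ha := happrox (m + 1) h2 hle
        simp only [Nat.add_sub_cancel] at hr ha
        have htri : ‖ubar (m + 1) - u m‖ ≤ ‖ubar (m + 1) - ubar m‖ + ‖ubar m - u m‖ := by
          have := norm_add_le (ubar (m + 1) - ubar m) (ubar m - u m)
          simpa using this
        have hpow : β ^ (n - m) = β * β ^ (n - (m + 1)) := by
          rw [← pow_succ']
          congr 1
          omega
        have hchain : ‖ubar (m + 1) - u (m + 1)‖ ≤
            γ ^ p * (C * (β ^ (n - (m + 1)) * δ) + K * (β ^ (n - m) * δ)) := by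
          calc ‖ubar (m + 1) - u (m + 1)‖ ≤ γ ^ p * ‖ubar (m + 1) - u m‖ := hr
            _ ≤ γ ^ p * (C * (β ^ (n - (m + 1)) * δ) + K * (β ^ (n - m) * δ)) := by
                apply mul_le_mul_of_nonneg_left _ hγp
                calc ‖ubar (m + 1) - u m‖ ≤ ‖ubar (m + 1) - ubar m‖ + ‖ubar m - u m‖ := htri
                  _ ≤ C * (β ^ (n - (m + 1)) * δ) + K * (β ^ (n - m) * δ) :=
                    add_le_add ha ihm
        refine hchain.trans ?_
        rw [hpow]
        have hKeq : γ ^ p * C + γ ^ p * (K * β) = K := by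
          have : K * (1 - β * γ ^ p) = C * γ ^ p := by
            rw [hK, div_mul_cancel₀ _ hden.ne']
          nlinarith [this]
        nlinarith [mul_nonneg (pow_nonneg (le_of_lt (lt_trans zero_lt_one hβ)) (n - (m+1))) hδ, hKeq]
  have := key n hn le_rfl
  simpa using this
end
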